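/- Let A be a unital C*-algebra, let u and v be unitary elements of A, and let σ be a *-automorphism of A with σ(u) = v and σ(v) = u. Let φ : FreeGroup (Fin 2) → A be the map sending a reduced word in the two free generators to the corresponding product of integer powers of u and v (i.e., φ is induced by the group homomorphism from the free group on two generators to the unitary group of A sending the first generator to u and the second to v). Then for every g in the free group on two generators, the element φ(g) + σ(φ(g)) lies in the smallest closed *-subalgebra of A containing the set {uⁿ + vⁿ : n ∈ ℤ}. -/

import Mathlib

namespace SymAux

variable {A : Type*} [CStarAlgebra A] (u v : unitary A)

noncomputable def gen (p : Fin 2 × ℤ) : unitary A := ![u, v] p.1 ^ p.2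

noncomputable def F (L : List (Fin 2 × ℤ)) : unitary A := (L.map (gen u v)).prod

def τ (L : List (Fin 2 × ℤ)) : List (Fin 2 × ℤ) := L.map (fun p => (p.1 + 1, p.2))

@[simp] lemma F_nil : F u v [] = 1 := rfl

@[simp] lemma F_cons (p : Fin 2 × ℤ) (L : List (Fin 2 × ℤ)) :
    F u v (p :: L) = gen u v p * F u v L := by simp [F]

@[simp] lemma τ_nil : τ ([] : List (Fin 2 × ℤ)) = [] := rfl

@[simp] lemma τ_cons (p : Fin 2 × ℤ) (L : List (Fin 2 × ℤ)) :
    τ (p :: L) = (p.1 + 1, p.2) :: τ L := rfl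

@[simp] lemma τ_τ (L : List (Fin 2 × ℤ)) : τ (τ L) = L := by
  simp only [τ, List.map_map]
  have : ∀ x : Fin 2, x + 1 + 1 = x := by decide
  simp [Function.comp_def, this]

lemma F_append (L₁ L₂ : List (Fin 2 × ℤ)) :
    F u v (L₁ ++ L₂) = F u v L₁ * F u v L₂ := by
  simp [F]

lemma τ_append (L₁ L₂ : List (Fin 2 × ℤ)) : τ (L₁ ++ L₂) = τ L₁ ++ τ L₂ := by
  simp [τ]

noncomputable def B : StarSubalgebra ℂ A :=
  (StarAlgebra.adjoin ℂ
    {a : A | ∃ n : ℤ, a = ((u ^ n : unitary A) : A) + ((v ^ n : unitary A) : A)}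
   ).topologicalClosure

lemma pow_mem (n : ℤ) :
    ((u ^ n : unitary A) : A) + ((v ^ n : unitary A) : A) ∈ B u v :=
  StarSubalgebra.le_topologicalClosure _ (StarAlgebra.subset_adjoin ℂ _ ⟨n, rfl⟩)

lemma pair_mem (x : Fin 2) (k : ℤ) :
    ((gen u v (x, k) : A) + (gen u v (x + 1, k) : A)) ∈ B u v := by
  fin_cases x
  · simpa [gen] using pow_mem u v k
  · simpa [gen, add_comm] using pow_mem u v k

lemma key : ∀ (n : ℕ) (L : List (Fin 2 × ℤ)), L.length ≤ n →
    ((F u v L : A) + (F u v (τ L) : A)) ∈ B u v := by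
  intro n
  induction n with
  | zero =>
    intro L hL
    rw [Nat.le_zero, List.length_eq_zero_iff] at hL
    subst hL
    simpa using pow_mem u v 0
  | succ n ih =>
    intro L hL
    match L with
    | [] => simpa using pow_mem u v 0
    | [(x, k)] => simpa using pair_mem u v x k
    | (x, k) :: (y, j) :: L'' =>
      by_cases hxy : x = y
      · subst hxy
        have hmerge : ∀ (z : Fin 2) (M : List (Fin 2 × ℤ)),
            F u v ((z, k) :: (z, j) :: M) = F u v ((z, k + j) :: M) := by
          intro z M
          simp [zpow_add, gen, mul_assoc]
        have h2 : τ ((x, k) :: (x, j) :: L'') = (x+1, k) :: (x+1, j) :: τ L'' := rfl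
        rw [h2, hmerge, hmerge]
        have := ih ((x, k + j) :: L'') (by simpa [τ] using Nat.le_of_succ_le_succ hL)
        simpa [τ] using this
      · have hy : y = x + 1 := by fin_omega
        subst hy
        have hxx : x + 1 + 1 = x := by fin_omega
        -- abbreviations
        set g1 : A := (gen u v (x, k) : A)
        set g2 : A := (gen u v (x + 1, k) : A)
        set g3 : A := (gen u v (x, j) : A)
        set g4 : A := (gen u v (x + 1, j) : A)
        set P : A := (F u v L'' : A)
        set Q : A := (F u v (τ L'') : A)
        have hlen : ((x+1, j) :: L'').length ≤ n := by simpa using Nat.le_of_succ_le_succ hL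
        have ha := ih ((x+1, j) :: L'') hlen
        have hb := ih ((x, k + j) :: τ L'') (by simpa [τ] using hlen)
        have hga : ((F u v ((x+1, j) :: L'') : A) + (F u v (τ ((x+1, j) :: L'')) : A))
            = g4 * P + g3 * Q := by
          simp [τ_cons, hxx, g3, g4, P, Q]
        have hgb : ((F u v ((x, k + j) :: τ L'') : A) + (F u v (τ ((x, k + j) :: τ L'')) : A))
            = g1 * g3 * Q + g2 * g4 * P := by
          have e1 : gen u v (x, k + j) = gen u v (x, k) * gen u v (x, j) := by
            simp [gen, zpow_add]
          have e2 : gen u v (x + 1, k + j) = gen u v (x + 1, k) * gen u v (x + 1, j) := by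
            simp [gen, zpow_add]
          simp [τ_cons, τ_τ, e1, e2, g1, g2, g3, g4, P, Q, mul_assoc]
        rw [hga] at ha
        rw [hgb] at hb
        have hgoal : ((F u v ((x, k) :: (x+1, j) :: L'') : A)
            + (F u v (τ ((x, k) :: (x+1, j) :: L'')) : A))
            = (g1 + g2) * (g4 * P + g3 * Q) - (g1 * g3 * Q + g2 * g4 * P) := by
          simp only [τ_cons, hxx, F_cons, MulMemClass.coe_mul]
          show g1 * (g4 * P) + g2 * (g3 * Q) = _
          noncomm_ring
        rw [hgoal]
        exact sub_mem (mul_mem (pair_mem u v x k) ha) hb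

def invL (L : List (Fin 2 × ℤ)) : List (Fin 2 × ℤ) :=
  (L.map (fun p => (p.1, -p.2))).reverse

lemma F_invL (L : List (Fin 2 × ℤ)) : F u v (invL L) = (F u v L)⁻¹ := by
  induction L with
  | nil => simp [invL]
  | cons p L ih =>
    have : invL (p :: L) = invL L ++ [(p.1, -p.2)] := by simp [invL]
    rw [this, F_append, ih]
    simp [gen, mul_inv_rev, zpow_neg]

lemma τ_invL (L : List (Fin 2 × ℤ)) : τ (invL L) = invL (τ L) := by
  simp [invL, τ, List.map_map, Function.comp_def]

lemma exists_list (σ : A ≃⋆ₐ[ℂ] A) (hσu : σ u = v) (hσv : σ v = u)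
    (g : FreeGroup (Fin 2)) :
    ∃ L : List (Fin 2 × ℤ),
      (FreeGroup.lift ![u, v] g : unitary A) = F u v L ∧
      σ ((FreeGroup.lift ![u, v] g : unitary A) : A) = ((F u v (τ L) : unitary A) : A) := by
  induction g using FreeGroup.induction_on with
  | C1 => exact ⟨[], by simp, by simp⟩
  | of x =>
    have hpure : (FreeGroup.lift ![u, v]) (FreeGroup.of x) = ![u, v] x := FreeGroup.lift_apply_of
    refine ⟨[(x, 1)], ?_, ?_⟩
    · rw [hpure]; simp [gen]
    · rw [hpure]; fin_cases x <;> simp [gen, hσu, hσv]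
  | inv_of x ih =>
    obtain ⟨L, h1, h2⟩ := ih
    refine ⟨invL L, ?_, ?_⟩
    · rw [map_inv, h1, F_invL]
    · have hstar : ((((FreeGroup.lift ![u, v]) (FreeGroup.of x))⁻¹ : unitary A) : A)
          = star (((FreeGroup.lift ![u, v]) (FreeGroup.of x) : unitary A) : A) := by
        rw [← Unitary.star_eq_inv, Unitary.coe_star]
      rw [map_inv, hstar, map_star, h2, τ_invL, ← τ_τ L, F_invL,
        ← Unitary.star_eq_inv, Unitary.coe_star]
  | mul a b iha ihb =>
    obtain ⟨La, ha1, ha2⟩ := iha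
    obtain ⟨Lb, hb1, hb2⟩ := ihb
    refine ⟨La ++ Lb, ?_, ?_⟩
    · rw [map_mul, ha1, hb1, F_append]
    · rw [map_mul, MulMemClass.coe_mul, map_mul, ha2, hb2, τ_append, F_append,
        MulMemClass.coe_mul]

end SymAux

theorem word_plus_flipped_word_mem_symmetric_algebra
    {A : Type*} [CStarAlgebra A]
    (u v : unitary A)
    (σ : A ≃⋆ₐ[ℂ] A) (hσu : σ u = v) (hσv : σ v = u)
    (φ : FreeGroup (Fin 2) →* unitary A) (hφ : φ = FreeGroup.lift ![u, v])
    (g : FreeGroup (Fin 2)) :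
    ((φ g : A) + σ (φ g)) ∈
      (StarAlgebra.adjoin ℂ
        {a : A | ∃ n : ℤ, a = ((u ^ n : unitary A) : A) + ((v ^ n : unitary A) : A)}
       ).topologicalClosure := by
  subst hφ
  obtain ⟨L, h1, h2⟩ := SymAux.exists_list u v σ hσu hσv g
  rw [h1] at h2 ⊢
  rw [h2]
  exact SymAux.key u v L.length L le_rfl
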